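/- If the agent has perfect recall, then for all runs r₁, r₂ ∈ ℛ and every time m, the sets of runs passing through the information sets K(r₁,m) and K(r₂,m) are nested or disjoint: either ℛ(K(r₁,m)) ⊆ ℛ(K(r₂,m)), or ℛ(K(r₂,m)) ⊆ ℛ(K(r₁,m)), or ℛ(K(r₁,m)) ∩ ℛ(K(r₂,m)) = ∅. -/
import Mathlib


open scoped Classical

namespace SBP

variable {L : Type*}

/-- A point: a run together with a time. -/
abbrev Point (L : Type*) := (ℕ → L) × ℕ

/-- The information set `K(r,m)`: all points `(r',m')` with `r' ∈ ℛ` and `r' m' = r m`. -/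
def K (ℛ : Finset (ℕ → L)) (r : ℕ → L) (m : ℕ) : Set (Point L) :=
  {p | p.1 ∈ ℛ ∧ p.1 p.2 = r m}

/-- `ℛ(U)`: the runs of `ℛ` passing through some point of `U`. -/
noncomputable def runsOf (ℛ : Finset (ℕ → L)) (U : Set (Point L)) : Finset (ℕ → L) :=
  ℛ.filter fun r' => ∃ m', (r', m') ∈ U

/-- A system is synchronous if indistinguishable points occur at the same time. -/
def Synchronous (ℛ : Finset (ℕ → L)) : Prop :=
  ∀ r ∈ ℛ, ∀ r' ∈ ℛ, ∀ m m' : ℕ, r m = r' m' → m = m'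

/-- The local-state sequence of run `r` at time `m`:
`r 0, r 1, …, r m` with consecutive repetitions removed. -/
noncomputable def lseq (r : ℕ → L) (m : ℕ) : List L :=
  ((List.range (m + 1)).map r).destutter (· ≠ ·)

/-- Perfect recall: indistinguishable points have the same local-state sequence. -/
def PerfectRecall (ℛ : Finset (ℕ → L)) : Prop :=
  ∀ r ∈ ℛ, ∀ r' ∈ ℛ, ∀ m m' : ℕ, r m = r' m' → lseq r m = lseq r' m'

/-- A run-based event: contains all points of a run or none of them. -/
def RunBased (U : Set (Point L)) : Prop :=
  ∀ (r' : ℕ → L) (k k' : ℕ), (r', k) ∈ U → (r', k') ∈ U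

/-- The probability of a (finite) set of runs. -/
noncomputable def PrS (pr : (ℕ → L) → ℝ) (S : Finset (ℕ → L)) : ℝ := ∑ r ∈ S, pr r

/-- `n_{(r,m)}(r')`: the number of points of the information set `K(r,m)` lying on run `r'`. -/
noncomputable def npts (r : ℕ → L) (m : ℕ) (r' : ℕ → L) : ℕ :=
  Nat.card {k : ℕ | r' k = r m}

/-- The Elga probability of a single point, for the agent at the point `(r,m)`. -/
noncomputable def elga (ℛ : Finset (ℕ → L)) (pr : (ℕ → L) → ℝ) (r : ℕ → L) (m : ℕ)
    (p : Point L) : ℝ :=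
  if p ∈ K ℛ r m then
    pr p.1 / ∑ r'' ∈ runsOf ℛ (K ℛ r m), pr r'' * (npts r m r'' : ℝ)
  else 0


private lemma destutter'_getLast? (a : L) (l : List L) :
    (l.destutter' (· ≠ ·) a).getLast? = (a :: l).getLast? := by
  induction l generalizing a with
  | nil => simp [List.destutter'_nil]
  | cons b l ih =>
    rw [List.destutter'_cons]
    by_cases h : a ≠ b
    · rw [if_pos h]
      obtain ⟨c, t, hct⟩ := List.exists_cons_of_ne_nil (l.destutter'_ne_nil (R := (· ≠ ·)) (a := b))
      rw [List.getLast?_cons_cons]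
      rw [← ih b, hct, List.getLast?_cons_cons]
    · rw [if_neg h]
      push_neg at h
      subst h
      rw [ih a, List.getLast?_cons_cons]

private lemma destutter'_concat (a b : L) (l : List L) :
    (l ++ [b]).destutter' (· ≠ ·) a = (l.destutter' (· ≠ ·) a) ++ [b] ∨
    (l ++ [b]).destutter' (· ≠ ·) a = l.destutter' (· ≠ ·) a := by
  induction l generalizing a with
  | nil =>
    by_cases h : a ≠ b
    · left; simp [List.destutter'_nil, List.destutter'_singleton, if_pos h]
    · right; simp [List.destutter'_nil, List.destutter'_singleton, if_neg h]
  | cons c l ih =>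
    rw [List.cons_append, List.destutter'_cons, List.destutter'_cons]
    by_cases h : a ≠ c
    · rw [if_pos h, if_pos h]
      rcases ih c with h1 | h1
      · left; rw [h1, List.cons_append]
      · right; rw [h1]
    · rw [if_neg h, if_neg h]; exact ih a

private lemma lseq_ne_nil (r : ℕ → L) (m : ℕ) : lseq r m ≠ [] := by
  rw [lseq, Ne, List.destutter_eq_nil]
  simp [List.range_succ]

private lemma lseq_getLast? (r : ℕ → L) (m : ℕ) : (lseq r m).getLast? = some (r m) := by
  rw [lseq, List.range_succ, List.map_append]
  obtain ⟨a, t, hat⟩ : ∃ a t, (List.range m).map r = a :: t ∨ (List.range m).map r = [] := by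
    rcases (List.range m).map r with _ | ⟨a, t⟩
    · exact ⟨r 0, [], Or.inr rfl⟩
    · exact ⟨a, t, Or.inl rfl⟩
  rcases hat with h | h
  · rw [h, List.cons_append, List.destutter_cons', destutter'_getLast?, ← List.cons_append, ← h]
    simp
  · rw [h]; simp [List.destutter_singleton]

private lemma lseq_succ (r : ℕ → L) (m : ℕ) :
    lseq r (m + 1) = lseq r m ++ [r (m + 1)] ∨ lseq r (m + 1) = lseq r m := by
  rw [lseq, lseq, List.range_succ (n := m + 1), List.map_append]
  obtain ⟨a, t, hat⟩ := List.exists_cons_of_ne_nil (l := (List.range (m+1)).map r) (by simp [List.range_succ])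
  rw [hat, List.cons_append, List.destutter_cons', List.destutter_cons']
  simpa using destutter'_concat a (r (m + 1)) t

private lemma lseq_prefix (r : ℕ → L) {k m : ℕ} (h : k ≤ m) : lseq r k <+: lseq r m := by
  induction m with
  | zero => simp_all
  | succ n ih =>
    rcases Nat.lt_or_ge k (n + 1) with h' | h'
    · have hp := ih (Nat.lt_succ_iff.mp h')
      rcases lseq_succ r n with h1 | h1
      · rw [h1]; exact hp.trans (List.prefix_append _ _)
      · rwa [h1]
    · have : k = n + 1 := le_antisymm h h'
      subst this; exact List.prefix_refl _

private lemma lseq_length_exists (r : ℕ → L) (m n : ℕ) (h1 : 1 ≤ n)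
    (h2 : n ≤ (lseq r m).length) : ∃ j ≤ m, (lseq r j).length = n := by
  induction m with
  | zero =>
    have h0 : (lseq r 0).length = 1 := by simp [lseq, List.range_succ, List.destutter_singleton]
    exact ⟨0, le_refl _, by omega⟩
  | succ k ih =>
    rcases Nat.lt_or_ge ((lseq r k).length) n with h' | h'
    · have hs' : (lseq r (k+1)).length = (lseq r k).length + 1 ∨
          (lseq r (k+1)).length = (lseq r k).length := by
        rcases lseq_succ r k with hs | hs
        · left; rw [hs]; simp
        · right; rw [hs]
      exact ⟨k + 1, le_refl _, by omega⟩
    · obtain ⟨j, hj, hjl⟩ := ih h'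
      exact ⟨j, hj.trans (Nat.le_succ k), hjl⟩

private lemma runs_subset_of_prefix (ℛ : Finset (ℕ → L)) (hrec : PerfectRecall ℛ)
    (r₁ : ℕ → L) (hr₁ : r₁ ∈ ℛ) (r₂ : ℕ → L) (hr₂ : r₂ ∈ ℛ) (m : ℕ)
    (hpre : lseq r₁ m <+: lseq r₂ m) :
    runsOf ℛ (K ℛ r₂ m) ⊆ runsOf ℛ (K ℛ r₁ m) := by
  intro r'' h''
  simp only [runsOf, K, Finset.mem_filter, Set.mem_setOf_eq] at h'' ⊢
  obtain ⟨hmem, m'', _, heq⟩ := h''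
  refine ⟨hmem, ?_⟩
  have hls : lseq r'' m'' = lseq r₂ m := hrec r'' hmem r₂ hr₂ m'' m heq
  have hlen : (lseq r₁ m).length ≤ (lseq r'' m'').length := by
    rw [hls]; exact hpre.length_le
  obtain ⟨j, hj, hjl⟩ := lseq_length_exists r'' m'' (lseq r₁ m).length
    (by have := lseq_ne_nil r₁ m; cases h : lseq r₁ m with
        | nil => exact absurd h this
        | cons a t => simp [h]) hlen
  have hpre1 : lseq r'' j <+: lseq r'' m'' := lseq_prefix r'' hj
  have hpre2 : lseq r₁ m <+: lseq r'' m'' := hls ▸ hpre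
  have : lseq r'' j = lseq r₁ m := by
    rcases List.prefix_or_prefix_of_prefix hpre1 hpre2 with h | h
    · exact h.eq_of_length (by rw [hjl])
    · exact (h.eq_of_length (by rw [hjl])).symm
  have hlast : (lseq r'' j).getLast? = (lseq r₁ m).getLast? := by rw [this]
  rw [lseq_getLast?, lseq_getLast?] at hlast
  exact ⟨j, hmem, Option.some_injective _ hlast⟩

/-- With perfect recall, the sets of runs passing through two information sets at the
same time are nested or disjoint. -/
theorem runs_nested_or_disjoint (ℛ : Finset (ℕ → L)) (hne : ℛ.Nonempty)
    (hrec : PerfectRecall ℛ)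
    (r₁ : ℕ → L) (hr₁ : r₁ ∈ ℛ) (r₂ : ℕ → L) (hr₂ : r₂ ∈ ℛ) (m : ℕ) :
    runsOf ℛ (K ℛ r₁ m) ⊆ runsOf ℛ (K ℛ r₂ m) ∨
    runsOf ℛ (K ℛ r₂ m) ⊆ runsOf ℛ (K ℛ r₁ m) ∨
    runsOf ℛ (K ℛ r₁ m) ∩ runsOf ℛ (K ℛ r₂ m) = ∅ := by
  by_cases hdisj : runsOf ℛ (K ℛ r₁ m) ∩ runsOf ℛ (K ℛ r₂ m) = ∅
  · exact Or.inr (Or.inr hdisj)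
  obtain ⟨r', hr'⟩ := Finset.nonempty_iff_ne_empty.mpr hdisj
  rw [Finset.mem_inter] at hr'
  obtain ⟨h1, h2⟩ := hr'
  simp only [runsOf, K, Finset.mem_filter, Set.mem_setOf_eq] at h1 h2
  obtain ⟨hmem, m₁, _, he1⟩ := h1
  obtain ⟨_, m₂, _, he2⟩ := h2
  have hl1 : lseq r' m₁ = lseq r₁ m := hrec r' hmem r₁ hr₁ m₁ m he1
  have hl2 : lseq r' m₂ = lseq r₂ m := hrec r' hmem r₂ hr₂ m₂ m he2
  rcases le_total m₁ m₂ with h | h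
  · have : lseq r₁ m <+: lseq r₂ m := by rw [← hl1, ← hl2]; exact lseq_prefix r' h
    exact Or.inr (Or.inl (runs_subset_of_prefix ℛ hrec r₁ hr₁ r₂ hr₂ m this))
  · have : lseq r₂ m <+: lseq r₁ m := by rw [← hl1, ← hl2]; exact lseq_prefix r' h
    exact Or.inl (runs_subset_of_prefix ℛ hrec r₂ hr₂ r₁ hr₁ m this)


end SBP
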